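/- arXiv:2601.10849 — 2 statements merged into one kernel-verified Lean document; each statement's English description precedes it below -/
import Mathlib

section
/- Let f : ℝ^N → ℝ satisfy: for all i and all vectors x, y with x_j = y_j for j ≠ i and x_i ≤ y_i, we have f(x) ≤ f(y) (coordinatewise monotonicity). Let A_i be nonempty finite sets and let u_i* ∈ argmax over A_i of g_i for given functions g_i : A_i → ℝ. Then the vector (u_1*, …, u_N*) maximizes the composed function u ↦ f(g_1(u_1), …, g_N(u_N)) over the product set A_1 × ⋯ × A_N. -/
theorem qmix_aux {N : ℕ} (f : (Fin N → ℝ) → ℝ)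
    (hmono : ∀ (i : Fin N) (x y : Fin N → ℝ),
      (∀ j, j ≠ i → x j = y j) → x i ≤ y i → f x ≤ f y)
    (x y : Fin N → ℝ) (hxy : ∀ i, x i ≤ y i) : f x ≤ f y := by
  have key : ∀ s : Finset (Fin N), f x ≤ f (fun i => if i ∈ s then y i else x i) := by
    intro s
    induction s using Finset.induction with
    | empty => simp
    | @insert a s hns ih =>
      refine ih.trans (hmono a _ _ ?_ ?_)
      · intro j hj; simp [Finset.mem_insert, hj]
      · simp only [Finset.mem_insert, hns, if_neg hns, if_pos (Or.inl rfl)]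
        exact hxy a
  have := key Finset.univ
  simpa using this


/-- QMIX consistency: if `f : ℝ^N → ℝ` is coordinatewise monotone nondecreasing,
`A i` are nonempty finite action sets, `g i` are local utility functions and `ustar i`
is a local greedy maximizer of `g i` over `A i`, then the tuple `ustar` maximizes
`u ↦ f (fun i => g i (u i))` over the product of the `A i`. -/
theorem stmt1 {N : ℕ} {α : Fin N → Type*} (f : (Fin N → ℝ) → ℝ)
    (hmono : ∀ (i : Fin N) (x y : Fin N → ℝ),
      (∀ j, j ≠ i → x j = y j) → x i ≤ y i → f x ≤ f y)
    (A : ∀ i, Finset (α i)) (hA : ∀ i, (A i).Nonempty)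
    (g : ∀ i, α i → ℝ) (ustar : ∀ i, α i)
    (hstar_mem : ∀ i, ustar i ∈ A i)
    (hstar_max : ∀ i, ∀ a ∈ A i, g i a ≤ g i (ustar i)) :
    ∀ u : ∀ i, α i, (∀ i, u i ∈ A i) →
      f (fun i => g i (u i)) ≤ f (fun i => g i (ustar i)) := by
  intro u hu
  exact qmix_aux f hmono _ _ (fun i => hstar_max i (u i) (hu i))
end

section
/- Let I be a nonempty finite set, D_i > 0, and R_i : (0, B] → (0, ∞) continuous, strictly increasing with lim_{b→0⁺} R_i(b) = 0. Then at any optimal solution (b_i*) of the problem min max_i D_i/R_i(b_i) subject to Σ b_i ≤ B, b_i > 0, the bandwidth constraint is tight (Σ b_i* = B) and all ratios are equal: D_i/R_i(b_i*) is the same for every i ∈ I. -/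
open Real Set

/-- At any optimal solution of the min-max bandwidth allocation problem
`min max_i D_i/R_i(b_i) s.t. Σ b_i ≤ B, b_i > 0`, the bandwidth constraint is tight and
all collection times `D_i/R_i(b_i*)` are equal. -/
theorem stmt6 {I : Type*} [Fintype I] [Nonempty I]
    (B : ℝ) (hB : 0 < B) (D : I → ℝ) (hD : ∀ i, 0 < D i)
    (R : I → ℝ → ℝ)
    (hRcont : ∀ i, ContinuousOn (R i) (Ioc 0 B))
    (hRmono : ∀ i, StrictMonoOn (R i) (Ioc 0 B))
    (hRpos : ∀ i, ∀ b ∈ Ioc (0:ℝ) B, 0 < R i b)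
    (hR0 : ∀ i, Filter.Tendsto (R i) (nhdsWithin 0 (Ioi 0)) (nhds 0))
    (bstar : I → ℝ) (hb_pos : ∀ i, 0 < bstar i) (hb_sum : (∑ i, bstar i) ≤ B)
    (hopt : ∀ b : I → ℝ, (∀ i, 0 < b i) → (∑ i, b i) ≤ B →
      Finset.univ.sup' Finset.univ_nonempty (fun i => D i / R i (bstar i)) ≤
        Finset.univ.sup' Finset.univ_nonempty (fun i => D i / R i (b i))) :
    (∑ i, bstar i) = B ∧
      ∀ i j : I, D i / R i (bstar i) = D j / R j (bstar j) := by
  classical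
  set M : ℝ := Finset.univ.sup' Finset.univ_nonempty (fun i => D i / R i (bstar i)) with hM
  -- membership of any positive function with sum ≤ B
  have hmem_gen : ∀ (b : I → ℝ), (∀ i, 0 < b i) → (∑ i, b i) ≤ B →
      ∀ i, b i ∈ Ioc (0:ℝ) B := by
    intro b hp hs i
    refine ⟨hp i, le_trans ?_ hs⟩
    exact Finset.single_le_sum (fun j _ => (hp j).le) (Finset.mem_univ i)
  have hmem : ∀ i, bstar i ∈ Ioc (0:ℝ) B := hmem_gen bstar hb_pos hb_sum
  -- ratio is strictly decreasing
  have hdec : ∀ i, ∀ x ∈ Ioc (0:ℝ) B, ∀ y ∈ Ioc (0:ℝ) B, x < y →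
      D i / R i y < D i / R i x := by
    intro i x hx y hy hxy
    exact div_lt_div_of_pos_left (hD i) (hRpos i x hx) (hRmono i hx hy hxy)
  have hleM : ∀ i, D i / R i (bstar i) ≤ M :=
    fun i => Finset.le_sup' (fun i => D i / R i (bstar i)) (Finset.mem_univ i)
  -- generic contradiction tool: any feasible strictly better point is impossible
  have hno : ∀ (b : I → ℝ), (∀ i, 0 < b i) → (∑ i, b i) ≤ B →
      (∀ i, D i / R i (b i) < M) → False := by
    intro b hp hs hlt
    have h1 := hopt b hp hs
    have h2 : Finset.univ.sup' Finset.univ_nonempty (fun i => D i / R i (b i)) < M :=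
      (Finset.sup'_lt_iff _).mpr (fun i _ => hlt i)
    exact absurd (h1.trans_lt h2) (lt_irrefl M)
  -- Part 1: the constraint is tight
  have hsum_eq : (∑ i, bstar i) = B := by
    by_contra hne
    have hlt : (∑ i, bstar i) < B := lt_of_le_of_ne hb_sum hne
    set n : ℝ := (Fintype.card I : ℝ) with hn'
    have hn : 0 < n := by
      have := Fintype.card_pos (α := I)
      simp only [hn']
      exact_mod_cast this
    set ε : ℝ := (B - ∑ i, bstar i) / n with hε
    have hεpos : 0 < ε := div_pos (by linarith) hn
    set b : I → ℝ := fun i => bstar i + ε with hbdef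
    have hp : ∀ i, 0 < b i := fun i => by
      have := hb_pos i; simp only [hbdef]; linarith
    have hs : (∑ i, b i) ≤ B := by
      have h3 : (∑ i, b i) = (∑ i, bstar i) + n * ε := by
        simp [hbdef, Finset.sum_add_distrib, hn', mul_comm]
      rw [h3, hε, mul_div_cancel₀ _ hn.ne']
      linarith
    refine hno b hp hs (fun i => ?_)
    have hbi : b i ∈ Ioc (0:ℝ) B := hmem_gen b hp hs i
    have hstep : D i / R i (b i) < D i / R i (bstar i) :=
      hdec i (bstar i) (hmem i) (b i) hbi (by simp only [hbdef]; linarith)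
    exact hstep.trans_le (hleM i)
  -- Part 2: all ratios equal M
  have hall : ∀ j, D j / R j (bstar j) = M := by
    intro j
    by_contra hne
    have hjlt : D j / R j (bstar j) < M := lt_of_le_of_ne (hleM j) hne
    -- there is some i0 attaining M, and i0 ≠ j so card ≥ 2
    obtain ⟨i0, _, hi0⟩ := Finset.exists_mem_eq_sup' (Finset.univ_nonempty (α := I))
      (fun i => D i / R i (bstar i))
    have hi0j : i0 ≠ j := by
      rintro rfl
      rw [← hi0] at hjlt
      exact lt_irrefl _ hjlt
    have hcard2 : 2 ≤ Fintype.card I := Fintype.one_lt_card_iff_nontrivial.mpr ⟨⟨i0, j, hi0j⟩⟩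
    -- find b' < bstar j with ratio still below M, using continuity
    have hc : ContinuousWithinAt (fun x => D j / R j x) (Ioc 0 B) (bstar j) := by
      refine (ContinuousOn.div continuousOn_const (hRcont j)
        (fun x hx => (hRpos j x hx).ne')) _ (hmem j)
    have hev : ∀ᶠ x in nhdsWithin (bstar j) (Ioc 0 B), D j / R j x < M :=
      hc.eventually_lt_const hjlt
    have hsub : Ioo (0:ℝ) (bstar j) ⊆ Ioc 0 B := fun x hx =>
      ⟨hx.1, hx.2.le.trans (hmem j).2⟩
    have hne2 : (nhdsWithin (bstar j) (Ioo (0:ℝ) (bstar j))).NeBot := by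
      rw [← mem_closure_iff_nhdsWithin_neBot, closure_Ioo (hb_pos j).ne]
      exact ⟨(hb_pos j).le, le_rfl⟩
    have hev2 : ∀ᶠ x in nhdsWithin (bstar j) (Ioo 0 (bstar j)),
        D j / R j x < M := hev.filter_mono (nhdsWithin_mono _ hsub)
    obtain ⟨b', hb'lt, hb'mem⟩ := (hev2.and self_mem_nhdsWithin).exists
    set δ : ℝ := bstar j - b' with hδ
    have hδpos : 0 < δ := by simp only [hδ]; linarith [hb'mem.2]
    set k : ℝ := ((Fintype.card I : ℝ) - 1) with hk
    have hkpos : 0 < k := by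
      simp only [hk]
      have : (2:ℝ) ≤ (Fintype.card I : ℝ) := by exact_mod_cast hcard2
      linarith
    set c : ℝ := δ / k with hc2
    have hcpos : 0 < c := div_pos hδpos hkpos
    set b : I → ℝ := Function.update (fun i => bstar i + c) j b' with hbdef
    have hp : ∀ i, 0 < b i := by
      intro i
      by_cases h : i = j
      · subst h; simp [hbdef, hb'mem.1]
      · simp [hbdef, Function.update_of_ne h]
        have := hb_pos i; linarith
    have hsumb : (∑ i, b i) = ∑ i, bstar i := by
      rw [hbdef, Finset.sum_update_of_mem (Finset.mem_univ j),
        Finset.sum_add_distrib, Finset.sum_const]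
      have hjsum : (∑ i, bstar i) = bstar j + ∑ x ∈ Finset.univ \ {j}, bstar x :=
        Finset.sum_eq_add_sum_sdiff_singleton_of_mem (Finset.mem_univ j) bstar
      have h1 : 1 ≤ Fintype.card I := Fintype.card_pos
      have hcd : ((Finset.univ \ {j}).card : ℝ) = k := by
        rw [Finset.sdiff_singleton_eq_erase, Finset.card_erase_of_mem (Finset.mem_univ j),
          Finset.card_univ, Nat.cast_sub h1]
        simp [hk]
      rw [nsmul_eq_mul, hcd, hc2, mul_div_cancel₀ _ hkpos.ne', hjsum, hδ]
      ring
    have hs : (∑ i, b i) ≤ B := by rw [hsumb]; exact hb_sum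
    refine hno b hp hs (fun i => ?_)
    by_cases h : i = j
    · subst h
      simpa [hbdef] using hb'lt
    · have hbi : b i ∈ Ioc (0:ℝ) B := hmem_gen b hp hs i
      have hbival : b i = bstar i + c := by simp [hbdef, Function.update_of_ne h]
      have hlt2 : D i / R i (b i) < D i / R i (bstar i) := by
        refine hdec i (bstar i) (hmem i) (b i) hbi ?_
        rw [hbival]; linarith
      exact hlt2.trans_le (hleM i)
  exact ⟨hsum_eq, fun i j => (hall i).trans (hall j).symm⟩
end
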